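/- arXiv:1710.08350 — 7 statements merged into one kernel-verified Lean document; each statement's English description precedes it below -/
import Mathlib

section
/- Coinduction principle (Theorem on coinduction): for all polynomials p, q ∈ ℝ[x], p ∼_Φ q if and only if p(x(t)) = q(x(t)) for all t ∈ D. -/
open MvPolynomial

/-- The Lie derivative of a polynomial along the polynomial vector field `F`. -/
noncomputable def lieDeriv {N : ℕ} (F : Fin N → MvPolynomial (Fin N) ℝ)
    (p : MvPolynomial (Fin N) ℝ) : MvPolynomial (Fin N) ℝ :=
  ∑ i, pderiv i p * F i

/-- `R` is an 𝓛-bisimulation for the initial value problem `Φ = (F, v₀)`. -/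
def IsLBisim {N : ℕ} (F : Fin N → MvPolynomial (Fin N) ℝ) (v₀ : Fin N → ℝ)
    (R : MvPolynomial (Fin N) ℝ → MvPolynomial (Fin N) ℝ → Prop) : Prop :=
  ∀ p q, R p q → eval v₀ p = eval v₀ q ∧ R (lieDeriv F p) (lieDeriv F q)

/-- `p ∼_Φ q`: the polynomials are related by some 𝓛-bisimulation. -/
def LBisimilar {N : ℕ} (F : Fin N → MvPolynomial (Fin N) ℝ) (v₀ : Fin N → ℝ)
    (p q : MvPolynomial (Fin N) ℝ) : Prop :=
  ∃ R, IsLBisim F v₀ R ∧ R p q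

lemma lieDeriv_C {N : ℕ} (F : Fin N → MvPolynomial (Fin N) ℝ) (a : ℝ) :
    lieDeriv F (C a) = 0 := by
  simp [lieDeriv, pderiv_C]

lemma lieDeriv_add {N : ℕ} (F : Fin N → MvPolynomial (Fin N) ℝ) (p q : MvPolynomial (Fin N) ℝ) :
    lieDeriv F (p + q) = lieDeriv F p + lieDeriv F q := by
  simp [lieDeriv, add_mul, Finset.sum_add_distrib]

lemma lieDeriv_sub {N : ℕ} (F : Fin N → MvPolynomial (Fin N) ℝ) (p q : MvPolynomial (Fin N) ℝ) :
    lieDeriv F (p - q) = lieDeriv F p - lieDeriv F q := by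
  simp [lieDeriv, sub_mul, Finset.sum_sub_distrib]

lemma lieDeriv_mul {N : ℕ} (F : Fin N → MvPolynomial (Fin N) ℝ) (p q : MvPolynomial (Fin N) ℝ) :
    lieDeriv F (p * q) = lieDeriv F p * q + p * lieDeriv F q := by
  rw [lieDeriv, lieDeriv, lieDeriv]
  simp only [pderiv_mul, add_mul]
  rw [Finset.sum_add_distrib, Finset.sum_mul, Finset.mul_sum]
  congr 1 <;> exact Finset.sum_congr rfl fun i _ => by ring

lemma lieDeriv_X {N : ℕ} (F : Fin N → MvPolynomial (Fin N) ℝ) (n : Fin N) :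
    lieDeriv F (X n) = F n := by
  rw [lieDeriv, Finset.sum_eq_single n]
  · simp [pderiv_X_self]
  · intro i _ h; rw [pderiv_X_of_ne (Ne.symm h)]; simp
  · simp

section Main

variable {N : ℕ} (F : Fin N → MvPolynomial (Fin N) ℝ)
    {D : Set ℝ} (hD : IsOpen D) {x : ℝ → Fin N → ℝ}
    (hsol : ∀ t ∈ D, HasDerivAt x (fun i => eval (x t) (F i)) t)

include hsol in
lemma hasDerivAt_eval_sol (r : MvPolynomial (Fin N) ℝ) {t : ℝ} (ht : t ∈ D) :
    HasDerivAt (fun s => eval (x s) r) (eval (x t) (lieDeriv F r)) t := by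
  induction r using MvPolynomial.induction_on with
  | C a => simpa [lieDeriv_C] using hasDerivAt_const t (a : ℝ)
  | add p q hp hq => simpa [lieDeriv_add, Pi.add_def] using hp.add hq
  | mul_X p n hp =>
      have hxn : HasDerivAt (fun s => x s n) (eval (x t) (F n)) t :=
        (hasDerivAt_pi.1 (hsol t ht)) n
      have := hp.mul hxn
      simpa [lieDeriv_mul, lieDeriv_X, mul_comm, Pi.mul_def] using this

lemma analyticOnNhd_eval_sol (han : ∀ i, AnalyticOnNhd ℝ (fun t => x t i) D)
    (r : MvPolynomial (Fin N) ℝ) :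
    AnalyticOnNhd ℝ (fun t => eval (x t) r) D := by
  induction r using MvPolynomial.induction_on with
  | C a => exact fun t _ => by simpa using (analyticAt_const : AnalyticAt ℝ (fun _ : ℝ => (a : ℝ)) t)
  | add p q hp hq => simpa [eval_add, Pi.add_def] using hp.add hq
  | mul_X p n hp => simpa [eval_mul] using hp.mul (han n)

include hD hsol in
lemma iterate_deriv_eval_sol (r : MvPolynomial (Fin N) ℝ) (n : ℕ) :
    ∀ t ∈ D, deriv^[n] (fun s => eval (x s) r) t = eval (x t) ((lieDeriv F)^[n] r) := by
  induction n with
  | zero => intro t _; simp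
  | succ n ih =>
      intro t ht
      have hev : deriv^[n] (fun s => eval (x s) r) =ᶠ[nhds t]
          (fun s => eval (x s) ((lieDeriv F)^[n] r)) := by
        filter_upwards [hD.mem_nhds ht] with s hs using ih s hs
      calc deriv^[n+1] (fun s => eval (x s) r) t
          = deriv (deriv^[n] (fun s => eval (x s) r)) t := by
            rw [Function.iterate_succ_apply' deriv n]
        _ = deriv (fun s => eval (x s) ((lieDeriv F)^[n] r)) t := hev.deriv_eq
        _ = eval (x t) (lieDeriv F ((lieDeriv F)^[n] r)) :=
            (hasDerivAt_eval_sol F hsol _ ht).deriv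
        _ = eval (x t) ((lieDeriv F)^[n+1] r) := by
            rw [Function.iterate_succ_apply' (lieDeriv F) n r]

end Main

/-- coinduction: `p ∼_Φ q` iff `p(x(t)) = q(x(t))` for all `t ∈ D`. -/
theorem stmt1
    (N : ℕ) (hN : 1 ≤ N)
    (F : Fin N → MvPolynomial (Fin N) ℝ) (v₀ : Fin N → ℝ)
    (D : Set ℝ) (hD : IsOpen D) (hDc : D.OrdConnected) (h0 : (0 : ℝ) ∈ D)
    (x : ℝ → Fin N → ℝ)
    (hsol : ∀ t ∈ D, HasDerivAt x (fun i => eval (x t) (F i)) t)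
    (hx0 : x 0 = v₀)
    (han : ∀ i, AnalyticOnNhd ℝ (fun t => x t i) D)
    (p q : MvPolynomial (Fin N) ℝ) :
    LBisimilar F v₀ p q ↔ ∀ t ∈ D, eval (x t) p = eval (x t) q := by
  constructor
  · rintro ⟨R, hR, hpq⟩
    -- all iterated Lie derivatives agree at v₀
    have hiter : ∀ n : ℕ, R ((lieDeriv F)^[n] p) ((lieDeriv F)^[n] q) := by
      intro n
      induction n with
      | zero => exact hpq
      | succ n ih =>
          rw [Function.iterate_succ_apply', Function.iterate_succ_apply']
          exact (hR _ _ ih).2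
    have hval : ∀ n : ℕ, eval v₀ ((lieDeriv F)^[n] p) = eval v₀ ((lieDeriv F)^[n] q) :=
      fun n => (hR _ _ (hiter n)).1
    -- consider g = eval (p - q)
    set g : ℝ → ℝ := fun s => eval (x s) (p - q) with hg
    have hgan : AnalyticOnNhd ℝ g D := analyticOnNhd_eval_sol (x := x) han (p - q)
    have hLsub : ∀ n : ℕ, (lieDeriv F)^[n] (p - q) =
        (lieDeriv F)^[n] p - (lieDeriv F)^[n] q := by
      intro n
      induction n with
      | zero => simp
      | succ n ih =>
          rw [Function.iterate_succ_apply', Function.iterate_succ_apply',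
            Function.iterate_succ_apply', ih, lieDeriv_sub]
    have hd0 : ∀ n : ℕ, iteratedDeriv n g 0 = 0 := by
      intro n
      rw [iteratedDeriv_eq_iterate, iterate_deriv_eval_sol F hD hsol (p - q) n 0 h0,
        hLsub, map_sub, hx0, hval, sub_self]
    -- g vanishes in a neighborhood of 0
    have hga0 : AnalyticAt ℝ g 0 := hgan 0 h0
    have hev0 : g =ᶠ[nhds (0:ℝ)] 0 := by
      obtain ⟨ps, hps⟩ := hga0
      obtain ⟨r, hball⟩ := hps
      filter_upwards [EMetric.ball_mem_nhds (0:ℝ) hball.r_pos] with y hy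
      have hsum := hball.hasSum_iteratedFDeriv (y := y) (by simpa using hy)
      have hz : HasSum (fun _ : ℕ => (0:ℝ)) (g (0 + y)) := by
        convert hsum with n
        · rfl
        rw [iteratedFDeriv_apply_eq_iteratedDeriv_mul_prod, hd0 n, smul_zero, smul_zero]
      have := hz.unique hasSum_zero
      simpa using this
    have heq := hgan.eqOn_zero_of_preconnected_of_eventuallyEq_zero
      hDc.isPreconnected h0 hev0
    intro t ht
    have h' := heq ht
    simp only [hg, Pi.zero_apply, map_sub, sub_eq_zero] at h'
    exact h'
  · intro h
    refine ⟨fun a b => ∀ t ∈ D, eval (x t) a = eval (x t) b, ?_, h⟩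
    intro a b hab
    constructor
    · have := hab 0 h0; rwa [hx0] at this
    · intro t ht
      have ha := (hasDerivAt_eval_sol F hsol a ht).deriv
      have hb := (hasDerivAt_eval_sol F hsol b ht).deriv
      rw [← ha, ← hb]
      apply Filter.EventuallyEq.deriv_eq
      filter_upwards [hD.mem_nhds ht] with s hs using hab s hs
end

section
/- If R is an 𝓛-bisimulation for Φ, then the ideal of ℝ[x] generated by the kernel ker(R) = {p − q : p R q} is a Φ-invariant. -/
open MvPolynomial

lemma lieDeriv_zero {N : ℕ} (F : Fin N → MvPolynomial (Fin N) ℝ) :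
    lieDeriv F 0 = 0 := by simp [lieDeriv]

/-- `I` is a `Φ`-invariant ideal: every element vanishes at `v₀` and `I` is closed
under Lie derivation. -/
def IsInvariantIdeal {N : ℕ} (F : Fin N → MvPolynomial (Fin N) ℝ) (v₀ : Fin N → ℝ)
    (I : Ideal (MvPolynomial (Fin N) ℝ)) : Prop :=
  (∀ p ∈ I, eval v₀ p = 0) ∧ ∀ p ∈ I, lieDeriv F p ∈ I

/-- if `R` is an 𝓛-bisimulation for `Φ`, then the ideal generated by
`ker(R) = {p − q : p R q}` is a `Φ`-invariant. -/
theorem stmt3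
    (N : ℕ) (hN : 1 ≤ N)
    (F : Fin N → MvPolynomial (Fin N) ℝ) (v₀ : Fin N → ℝ)
    (R : MvPolynomial (Fin N) ℝ → MvPolynomial (Fin N) ℝ → Prop)
    (hR : IsLBisim F v₀ R) :
    IsInvariantIdeal F v₀ (Ideal.span {r | ∃ p q, R p q ∧ r = p - q}) := by
  constructor
  · intro p hp
    have : Ideal.span {r | ∃ p q, R p q ∧ r = p - q} ≤ RingHom.ker (eval v₀) := by
      rw [Ideal.span_le]
      rintro r ⟨p, q, hpq, rfl⟩
      simp [RingHom.mem_ker, (hR p q hpq).1]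
    exact this hp
  · intro p hp
    induction hp using Submodule.span_induction with
    | mem r hr =>
      obtain ⟨p, q, hpq, rfl⟩ := hr
      exact Ideal.subset_span ⟨lieDeriv F p, lieDeriv F q, (hR p q hpq).2,
        lieDeriv_sub F p q⟩
    | zero => rw [lieDeriv_zero]; exact Ideal.zero_mem _
    | add x y _ _ hx hy => rw [lieDeriv_add]; exact Ideal.add_mem _ hx hy
    | smul c x hxmem hx =>
      replace hxmem : x ∈ Ideal.span {r | ∃ p q, R p q ∧ r = p - q} := hxmem
      rw [smul_eq_mul, lieDeriv_mul]
      exact Ideal.add_mem _ (Ideal.mul_mem_left _ _ hxmem)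
        (Ideal.mul_mem_left _ _ hx)
end

section
/- For every polynomial p ∈ ℝ[x]: p ∈ Z_Φ if and only if (𝓛⁽ʲ⁾(p))(v₀) = 0 for every integer j ≥ 0. -/
open MvPolynomial

/-- `Z_Φ`: the set of polynomials whose induced behaviour vanishes identically on `D`. -/
def Zset {N : ℕ} (x : ℝ → Fin N → ℝ) (D : Set ℝ) : Set (MvPolynomial (Fin N) ℝ) :=
  {p | ∀ t ∈ D, eval (x t) p = 0}

lemma lieDeriv_mul_X {N : ℕ} (F : Fin N → MvPolynomial (Fin N) ℝ)
    (p : MvPolynomial (Fin N) ℝ) (i : Fin N) :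
    lieDeriv F (p * X i) = lieDeriv F p * X i + p * F i := by
  unfold lieDeriv
  rw [Finset.sum_mul]
  rw [show (p * F i) = ∑ j, (if j = i then p * F j else 0) by simp]
  rw [← Finset.sum_add_distrib]
  refine Finset.sum_congr rfl fun j _ => ?_
  rw [pderiv_mul, pderiv_X]
  by_cases h : j = i
  · subst h; simp [Pi.single_eq_same]; ring
  · simp [Pi.single_eq_of_ne (Ne.symm h), h]; ring

/-- Analyticity of the evaluation of a polynomial along the analytic curve. -/
lemma eval_analytic {N : ℕ} {x : ℝ → Fin N → ℝ} {D : Set ℝ}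
    (han : ∀ i, AnalyticOnNhd ℝ (fun t => x t i) D)
    (q : MvPolynomial (Fin N) ℝ) :
    AnalyticOnNhd ℝ (fun t => eval (x t) q) D := by
  induction q using MvPolynomial.induction_on with
  | C a => simpa using analyticOnNhd_const (v := a)
  | add p q hp hq => simpa [map_add, Pi.add_def] using hp.add hq
  | mul_X p i hp => simpa [map_mul] using hp.mul (han i)

/-- Chain rule: derivative of the evaluation along the solution is the Lie derivative. -/
lemma eval_hasDerivAt {N : ℕ} {F : Fin N → MvPolynomial (Fin N) ℝ}
    {x : ℝ → Fin N → ℝ} {D : Set ℝ}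
    (hsol : ∀ t ∈ D, HasDerivAt x (fun i => eval (x t) (F i)) t)
    (q : MvPolynomial (Fin N) ℝ) {t : ℝ} (ht : t ∈ D) :
    HasDerivAt (fun s => eval (x s) q) (eval (x t) (lieDeriv F q)) t := by
  induction q using MvPolynomial.induction_on with
  | C a => simpa [lieDeriv_C] using hasDerivAt_const t (a : ℝ)
  | add p q hp hq => simpa [map_add, lieDeriv_add, Pi.add_def] using hp.add hq
  | mul_X p i hp =>
      have hxi : HasDerivAt (fun s => x s i) (eval (x t) (F i)) t :=
        hasDerivAt_pi.1 (hsol t ht) i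
      have := hp.mul hxi
      simpa [map_mul, lieDeriv_mul_X, map_add, Pi.mul_def, mul_comm, mul_assoc, mul_left_comm] using this

/-- `p ∈ Z_Φ` iff `(𝓛⁽ʲ⁾ p)(v₀) = 0` for every `j ≥ 0`. -/
theorem stmt5
    (N : ℕ) (hN : 1 ≤ N)
    (F : Fin N → MvPolynomial (Fin N) ℝ) (v₀ : Fin N → ℝ)
    (D : Set ℝ) (hD : IsOpen D) (hDc : D.OrdConnected) (h0 : (0 : ℝ) ∈ D)
    (x : ℝ → Fin N → ℝ)
    (hsol : ∀ t ∈ D, HasDerivAt x (fun i => eval (x t) (F i)) t)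
    (hx0 : x 0 = v₀)
    (han : ∀ i, AnalyticOnNhd ℝ (fun t => x t i) D)
    (p : MvPolynomial (Fin N) ℝ) :
    p ∈ Zset x D ↔ ∀ j : ℕ, eval v₀ ((lieDeriv F)^[j] p) = 0 := by
  constructor
  · intro hp j
    -- all iterates vanish identically on D
    have key : ∀ j : ℕ, ∀ t ∈ D, eval (x t) ((lieDeriv F)^[j] p) = 0 := by
      intro j
      induction j with
      | zero => simpa [Zset] using hp
      | succ j ih =>
          intro t ht
          have h1 : HasDerivAt (fun s => eval (x s) ((lieDeriv F)^[j] p))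
              (eval (x t) ((lieDeriv F)^[j+1] p)) t := by
            rw [Function.iterate_succ_apply']
            exact eval_hasDerivAt hsol _ ht
          have hev : (fun s => eval (x s) ((lieDeriv F)^[j] p)) =ᶠ[nhds t] (fun _ => (0:ℝ)) := by
            filter_upwards [hD.mem_nhds ht] with s hs using ih s hs
          have h2 : HasDerivAt (fun s => eval (x s) ((lieDeriv F)^[j] p)) 0 t :=
            (hasDerivAt_const t (0:ℝ)).congr_of_eventuallyEq hev
          exact (h1.unique h2)
    have := key j 0 h0
    rwa [hx0] at this
  · intro hj
    intro t ht
    set f : ℝ → ℝ := fun s => eval (x s) p with hf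
    have hanf : AnalyticOnNhd ℝ f D := eval_analytic han p
    -- iterated derivatives of f on D
    have hiter : ∀ j : ℕ, ∀ s ∈ D, iteratedDeriv j f s = eval (x s) ((lieDeriv F)^[j] p) := by
      intro j
      induction j with
      | zero => intro s _; simp [f]
      | succ j ih =>
          intro s hs
          rw [iteratedDeriv_succ]
          have hev : iteratedDeriv j f =ᶠ[nhds s]
              (fun u => eval (x u) ((lieDeriv F)^[j] p)) := by
            filter_upwards [hD.mem_nhds hs] with u hu using ih u hu
          rw [Filter.EventuallyEq.deriv_eq hev]
          have h1 : HasDerivAt (fun u => eval (x u) ((lieDeriv F)^[j] p))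
              (eval (x s) ((lieDeriv F)^[j+1] p)) s := by
            rw [Function.iterate_succ_apply']
            exact eval_hasDerivAt hsol _ hs
          exact h1.deriv
    have hder0 : ∀ j : ℕ, iteratedDeriv j f 0 = 0 := by
      intro j
      rw [hiter j 0 h0, hx0]
      exact hj j
    -- f vanishes near 0
    obtain ⟨ps, r, hps⟩ := hanf 0 h0
    have hps0 : ps = 0 := by
      ext1 n
      have h1 : n.factorial • ps n (fun _ => (1:ℝ)) = iteratedFDeriv ℝ n f 0 (fun _ => (1:ℝ)) :=
        hps.factorial_smul (1:ℝ) n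
      have h2 : iteratedFDeriv ℝ n f 0 (fun _ => (1:ℝ)) = iteratedDeriv n f 0 :=
        (iteratedDeriv_eq_iteratedFDeriv (n := n) (f := f) (x := 0)).symm
      have h3 : ps n (fun _ => (1:ℝ)) = 0 := by
        have := h1.trans (h2.trans (hder0 n))
        have hne : (n.factorial : ℝ) ≠ 0 := by exact_mod_cast Nat.factorial_ne_zero n
        rw [nsmul_eq_mul] at this
        exact (mul_eq_zero.1 this).resolve_left hne
      have : ps.coeff n = 0 := h3
      exact (FormalMultilinearSeries.coeff_eq_zero (p := ps) (n := n)).1 this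
    have hev0 : f =ᶠ[nhds 0] 0 := by
      rw [hps0] at hps
      exact hps.hasFPowerSeriesAt.eventually_eq_zero
    have hpre : IsPreconnected D := isPreconnected_iff_ordConnected.2 hDc
    exact hanf.eqOn_zero_of_preconnected_of_eventuallyEq_zero hpre h0 hev0 ht
end

section
/- Stabilization of the double chain: let π be a template with n parameters and suppose m ≥ 0 satisfies V_{m+1} = V_m and J_{m+1} = J_m. Then V_{m+j} = V_m and J_{m+j} = J_m for every j ≥ 1. -/
open MvPolynomial

/-- The vector space `V_i` of parameters `v` such that all Lie derivatives of `π[v]`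
up to order `i` vanish at `v₀`. -/
def Vset {N n : ℕ} (F : Fin N → MvPolynomial (Fin N) ℝ) (v₀ : Fin N → ℝ)
    (π : (Fin n → ℝ) →ₗ[ℝ] MvPolynomial (Fin N) ℝ) (i : ℕ) : Set (Fin n → ℝ) :=
  {v | ∀ j ≤ i, eval v₀ ((lieDeriv F)^[j] (π v)) = 0}

/-- The ideal `J_i` generated by `⋃_{j=0}^{i} 𝓛⁽ʲ⁾(π[V_i])`. -/
noncomputable def Jideal {N n : ℕ} (F : Fin N → MvPolynomial (Fin N) ℝ)
    (v₀ : Fin N → ℝ) (π : (Fin n → ℝ) →ₗ[ℝ] MvPolynomial (Fin N) ℝ) (i : ℕ) :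
    Ideal (MvPolynomial (Fin N) ℝ) :=
  Ideal.span {q | ∃ j ≤ i, ∃ v ∈ Vset F v₀ π i, q = (lieDeriv F)^[j] (π v)}

/-- stabilization of the double chain: if `V_{m+1} = V_m` and
`J_{m+1} = J_m`, then `V_{m+j} = V_m` and `J_{m+j} = J_m` for every `j ≥ 1`. -/
theorem stmt9
    (N n : ℕ) (hN : 1 ≤ N)
    (F : Fin N → MvPolynomial (Fin N) ℝ) (v₀ : Fin N → ℝ)
    (π : (Fin n → ℝ) →ₗ[ℝ] MvPolynomial (Fin N) ℝ) (m : ℕ)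
    (hV : Vset F v₀ π (m + 1) = Vset F v₀ π m)
    (hJ : Jideal F v₀ π (m + 1) = Jideal F v₀ π m) :
    ∀ j : ℕ, 1 ≤ j →
      Vset F v₀ π (m + j) = Vset F v₀ π m ∧ Jideal F v₀ π (m + j) = Jideal F v₀ π m := by
  -- Key lemma: J_m is closed under the Lie derivative, every element of J_m vanishes at v₀,
  -- and so does its Lie derivative.
  have hA : ∀ p ∈ Jideal F v₀ π m,
      lieDeriv F p ∈ Jideal F v₀ π m ∧ eval v₀ p = 0 := by
    intro p hp
    have : lieDeriv F p ∈ Jideal F v₀ π m ∧ eval v₀ p = 0 ∧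
        eval v₀ (lieDeriv F p) = 0 := by
      refine Submodule.span_induction ?_ ?_ ?_ ?_ hp
      · rintro q ⟨j, hj, v, hv, rfl⟩
        have hv' : v ∈ Vset F v₀ π (m + 1) := hV ▸ hv
        refine ⟨?_, hv j hj, ?_⟩
        · rw [← hJ]
          exact Ideal.subset_span ⟨j + 1, by omega, v, hv',
            (Function.iterate_succ_apply' (lieDeriv F) j (π v)).symm⟩
        · rw [← Function.iterate_succ_apply' (lieDeriv F) j (π v)]
          exact hv' (j + 1) (by omega)
      · have h0 : lieDeriv F (0 : MvPolynomial (Fin N) ℝ) = 0 := by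
          simp [lieDeriv]
        simp [h0]
      · rintro x y hx hy ⟨hx1, hx2, hx3⟩ ⟨hy1, hy2, hy3⟩
        refine ⟨?_, ?_, ?_⟩ <;> simp [lieDeriv_add, Ideal.add_mem _ hx1 hy1, hx2, hy2, hx3, hy3]
      · rintro a x hx ⟨hx1, hx2, hx3⟩
        rw [smul_eq_mul]
        refine ⟨?_, ?_, ?_⟩
        · rw [lieDeriv_mul]
          exact Ideal.add_mem _ (Ideal.mul_mem_left _ (lieDeriv F a) hx)
            (Ideal.mul_mem_left _ a hx1)
        · simp [hx2]
        · simp [lieDeriv_mul, hx2, hx3]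
    exact ⟨this.1, this.2.1⟩
  -- Every iterated Lie derivative of π v, v ∈ V_m, lies in J_m.
  have hB : ∀ v ∈ Vset F v₀ π m, ∀ j, (lieDeriv F)^[j] (π v) ∈ Jideal F v₀ π m := by
    intro v hv j
    induction j with
    | zero => exact Ideal.subset_span ⟨0, Nat.zero_le m, v, hv, rfl⟩
    | succ k ih =>
      rw [Function.iterate_succ_apply']
      exact (hA _ ih).1
  have hEval : ∀ v ∈ Vset F v₀ π m, ∀ j,
      eval v₀ ((lieDeriv F)^[j] (π v)) = 0 :=
    fun v hv j => (hA _ (hB v hv j)).2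
  -- V_i = V_m for all i ≥ m.
  have hVeq : ∀ i, m ≤ i → Vset F v₀ π i = Vset F v₀ π m := by
    intro i hi
    apply Set.eq_of_subset_of_subset
    · intro v hv j hj
      exact hv j (hj.trans hi)
    · intro v hv j _
      exact hEval v hv j
  have hJeq : ∀ i, m ≤ i → Jideal F v₀ π i = Jideal F v₀ π m := by
    intro i hi
    apply le_antisymm
    · rw [Jideal, Ideal.span_le]
      rintro q ⟨j, hj, v, hv, rfl⟩
      rw [hVeq i hi] at hv
      exact hB v hv j
    · rw [Jideal, Ideal.span_le]
      rintro q ⟨j, hj, v, hv, rfl⟩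
      exact Ideal.subset_span ⟨j, hj.trans hi, v, (hVeq i hi).symm ▸ hv, rfl⟩
  intro j _
  exact ⟨hVeq (m + j) (Nat.le_add_right m j), hJeq (m + j) (Nat.le_add_right m j)⟩
end

section
/- Exact reduction: let W = span{x(t) : t ∈ D} ⊆ ℝ^N, let l = dim W, and let B be a real N×l matrix whose columns form an orthonormal basis of W (so B^T B = I_l and the column span of B equals W). Define y(t) = B^T x(t) for t ∈ D. Then y is differentiable on D with y′(t) = B^T F(B y(t)) for all t ∈ D and y(0) = B^T v₀; moreover x(t) = B y(t) for all t ∈ D, and consequently p(x(t)) = p(B y(t)) for every polynomial p ∈ ℝ[x] and every t ∈ D. -/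
open MvPolynomial Matrix

lemma proj_fix {N l : ℕ} (B : Matrix (Fin N) (Fin l) ℝ) (hortho : Bᵀ * B = 1)
    (v : Fin N → ℝ) (hv : v ∈ Submodule.span ℝ (Set.range Bᵀ)) :
    B *ᵥ (Bᵀ *ᵥ v) = v := by
  induction hv using Submodule.span_induction with
  | mem w hw =>
    obtain ⟨j, rfl⟩ := hw
    have h1 : Bᵀ *ᵥ Bᵀ j = fun k => (1 : Matrix (Fin l) (Fin l) ℝ) k j := by
      funext k
      rw [← hortho]
      simp [Matrix.mulVec, Matrix.mul_apply, dotProduct, Matrix.transpose_apply]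
    rw [h1]
    funext i
    simp [Matrix.mulVec, dotProduct, Matrix.one_apply, Matrix.transpose_apply]
  | zero => simp
  | add w z _ _ hw hz => rw [Matrix.mulVec_add, Matrix.mulVec_add, hw, hz]
  | smul c w _ hw => rw [Matrix.mulVec_smul, Matrix.mulVec_smul, hw]


/-- exact reduction: let `W = span{x(t) : t ∈ D}`, `l = dim W`, and
let `B` be an `N×l` matrix whose columns form an orthonormal basis of `W`. With
`y(t) = Bᵀ x(t)`, the function `y` solves the reduced problem
`y′ = Bᵀ F(B y)`, `y(0) = Bᵀ v₀`; moreover `x(t) = B y(t)` on `D` and hence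
`p(x(t)) = p(B y(t))` for every polynomial `p`. -/
theorem stmt14
    (N : ℕ) (hN : 1 ≤ N)
    (F : Fin N → MvPolynomial (Fin N) ℝ) (v₀ : Fin N → ℝ)
    (D : Set ℝ) (hD : IsOpen D) (hDc : D.OrdConnected) (h0 : (0 : ℝ) ∈ D)
    (x : ℝ → Fin N → ℝ)
    (hsol : ∀ t ∈ D, HasDerivAt x (fun i => eval (x t) (F i)) t)
    (hx0 : x 0 = v₀)
    (l : ℕ)
    (hl : l = Module.finrank ℝ (Submodule.span ℝ (x '' D)))
    (B : Matrix (Fin N) (Fin l) ℝ)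
    (hortho : Bᵀ * B = 1)
    (hWspan : Submodule.span ℝ (Set.range Bᵀ) = Submodule.span ℝ (x '' D))
    (y : ℝ → Fin l → ℝ)
    (hy : ∀ t, y t = Bᵀ *ᵥ x t) :
    (∀ t ∈ D, HasDerivAt y (Bᵀ *ᵥ fun i => eval (B *ᵥ y t) (F i)) t) ∧
    y 0 = Bᵀ *ᵥ v₀ ∧
    (∀ t ∈ D, x t = B *ᵥ y t) ∧
    (∀ p : MvPolynomial (Fin N) ℝ, ∀ t ∈ D, eval (x t) p = eval (B *ᵥ y t) p) := by
  have hxB : ∀ t ∈ D, x t = B *ᵥ y t := by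
    intro t ht
    rw [hy t]
    exact (proj_fix B hortho (x t)
      (hWspan ▸ Submodule.subset_span ⟨t, ht, rfl⟩)).symm
  refine ⟨?_, ?_, hxB, ?_⟩
  · intro t ht
    have hL := ((Matrix.mulVecLin Bᵀ).toContinuousLinearMap.hasFDerivAt
      (x := x t)).comp_hasDerivAt t (hsol t ht)
    have hd : (Bᵀ *ᵥ fun i => eval (B *ᵥ y t) (F i)) = Bᵀ *ᵥ fun i => eval (x t) (F i) := by
      rw [← hxB t ht]
    rw [hd]
    have hfun : y = (Matrix.mulVecLin Bᵀ).toContinuousLinearMap ∘ x := by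
      funext s; exact hy s
    rw [hfun]
    exact hL
  · rw [hy 0, hx0]
  · intro p t ht
    rw [hxB t ht]
end

section
/- Krylov projection lemma: let L be a real M×M matrix, φ ∈ ℝ^M, m ≥ 1, and let K_m = span{φ, L^Tφ, …, (L^T)^{m−1}φ} ⊆ ℝ^M. Let B be a real M×l matrix with orthonormal columns (B^T B = I_l) whose column span equals K_m, and set A = B^T L^T B. Then (L^T)^j φ = B A^j B^T φ for every 0 ≤ j ≤ m−1. -/
open Matrix

/-- Krylov projection lemma: let `K_m = span{φ, Lᵀφ, …, (Lᵀ)^{m−1}φ}`,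
let `B` have orthonormal columns spanning `K_m`, and `A = Bᵀ Lᵀ B`. Then
`(Lᵀ)ʲ φ = B Aʲ Bᵀ φ` for every `0 ≤ j ≤ m−1`. -/
theorem stmt17
    (M l : ℕ) (L : Matrix (Fin M) (Fin M) ℝ) (φ : Fin M → ℝ)
    (m : ℕ) (hm : 1 ≤ m)
    (B : Matrix (Fin M) (Fin l) ℝ)
    (hortho : Bᵀ * B = 1)
    (hKspan : Submodule.span ℝ (Set.range Bᵀ)
      = Submodule.span ℝ {w : Fin M → ℝ | ∃ j < m, w = (Lᵀ ^ j) *ᵥ φ})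
    (A : Matrix (Fin l) (Fin l) ℝ)
    (hA : A = Bᵀ * Lᵀ * B) :
    ∀ j < m, (Lᵀ ^ j) *ᵥ φ = B *ᵥ ((A ^ j) *ᵥ (Bᵀ *ᵥ φ)) := by
  -- projection property: vectors in the Krylov space are fixed by B Bᵀ
  have hproj : ∀ v : Fin M → ℝ, v ∈ Submodule.span ℝ (Set.range Bᵀ) →
      B *ᵥ (Bᵀ *ᵥ v) = v := by
    intro v hv
    rw [show Set.range Bᵀ = Set.range (Matrix.col B) from rfl, ← Matrix.range_mulVecLin] at hv
    obtain ⟨x, hx⟩ := hv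
    simp only [Matrix.mulVecLin_apply] at hx
    rw [← hx, Matrix.mulVec_mulVec, Matrix.mulVec_mulVec, Matrix.mul_assoc, hortho, Matrix.mul_one]
  have hmem : ∀ j < m, ((Lᵀ ^ j) *ᵥ φ) ∈ Submodule.span ℝ (Set.range Bᵀ) := by
    intro j hj
    rw [hKspan]
    exact Submodule.subset_span ⟨j, hj, rfl⟩
  intro j hj
  induction j with
  | zero =>
    simp only [pow_zero, Matrix.one_mulVec]
    exact (hproj φ (by simpa using hmem 0 hm)).symm
  | succ n ih =>
    have hn : n < m := Nat.lt_of_succ_lt hj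
    have ihn := ih hn
    have h1 : (Lᵀ ^ (n + 1)) *ᵥ φ = Lᵀ *ᵥ ((Lᵀ ^ n) *ᵥ φ) := by
      rw [pow_succ']
      rw [← Matrix.mulVec_mulVec]
    calc (Lᵀ ^ (n + 1)) *ᵥ φ
        = B *ᵥ (Bᵀ *ᵥ ((Lᵀ ^ (n + 1)) *ᵥ φ)) := (hproj _ (hmem _ hj)).symm
      _ = B *ᵥ ((A ^ (n + 1)) *ᵥ (Bᵀ *ᵥ φ)) := by
          rw [h1, ihn, hA, pow_succ']
          simp only [Matrix.mulVec_mulVec, Matrix.mul_assoc]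
end

section
/- Exactness of the approximate linearization: in the setting of the approximate linearization, assume in addition that the representation 𝓛⁽ʲ⁾(p) = ∑_{k=1}^M (L^j p̂)_k · α_k holds for every j ≥ 0, and that the Krylov space K_m is invariant, i.e. L^T K_m ⊆ K_m. Then for every j ≥ 0 the j-th derivative at t = 0 of t ↦ p(x(t)) equals the j-th derivative at t = 0 of t ↦ p̂^T B y(t); in particular, if t ↦ p(x(t)) is real-analytic on the interval D, then p(x(t)) = p̂^T B y(t) for all t ∈ D. -/
open MvPolynomial Matrix Filter Asymptotics
open scoped Topology

section AuxLemmas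

lemma aux_hasDerivAt_eval {N : ℕ} (q : MvPolynomial (Fin N) ℝ)
    {x : ℝ → Fin N → ℝ} {v : Fin N → ℝ} {t : ℝ} (hx : HasDerivAt x v t) :
    HasDerivAt (fun s => eval (x s) q) (∑ i, eval (x t) (pderiv i q) * v i) t := by
  induction q using MvPolynomial.induction_on with
  | C c =>
      simp only [eval_C, pderiv_C, map_zero, zero_mul, Finset.sum_const_zero]
      exact hasDerivAt_const t _
  | add p q hp hq =>
      simp only [map_add, add_mul, Finset.sum_add_distrib]
      exact hp.add hq
  | mul_X q i hq =>
      have hxi : HasDerivAt (fun s => x s i) (v i) t := hasDerivAt_pi.1 hx i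
      have h : HasDerivAt (fun s => eval (x s) q * x s i) _ t := hq.mul hxi
      simp only [_root_.map_mul, eval_X] at h ⊢
      convert h using 1
      simp only [pderiv_mul, map_add, _root_.map_mul, eval_X, add_mul, Finset.sum_add_distrib]
      congr 1
      · rw [Finset.sum_mul]
        exact Finset.sum_congr rfl fun j _ => by ring
      · rw [Finset.sum_eq_single i]
        · simp
        · intro j _ hji
          rw [pderiv_X_of_ne (Ne.symm hji)]
          simp
        · simp

lemma aux_iterWithin {N : ℕ} {F : Fin N → MvPolynomial (Fin N) ℝ}
    {D : Set ℝ} (hD : IsOpen D) {x : ℝ → Fin N → ℝ}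
    (hsol : ∀ t ∈ D, HasDerivAt x (fun i => eval (x t) (F i)) t)
    (p : MvPolynomial (Fin N) ℝ) :
    ∀ j, ∀ t ∈ D, iteratedDerivWithin j (fun t => eval (x t) p) D t
      = eval (x t) ((lieDeriv F)^[j] p) := by
  intro j
  induction j with
  | zero => intro t ht; simp
  | succ j ih =>
      intro t ht
      have hq : ∀ s ∈ D, HasDerivAt (fun s => eval (x s) ((lieDeriv F)^[j] p))
          (eval (x s) (lieDeriv F ((lieDeriv F)^[j] p))) s := by
        intro s hs
        have h := aux_hasDerivAt_eval ((lieDeriv F)^[j] p) (hsol s hs)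
        simpa only [lieDeriv, map_sum, _root_.map_mul] using h
      rw [iteratedDerivWithin_succ,
        derivWithin_of_isOpen hD ht]
      have he : iteratedDerivWithin j (fun t => eval (x t) p) D
          =ᶠ[nhds t] fun s => eval (x s) ((lieDeriv F)^[j] p) := by
        filter_upwards [hD.mem_nhds ht] with s hs using ih s hs
      rw [he.deriv_eq, (hq t ht).deriv, Function.iterate_succ_apply']

lemma aux_iterDW_open {f : ℝ → ℝ} {s : Set ℝ} (hs : IsOpen s) {x : ℝ} (hx : x ∈ s) (n : ℕ) :
    iteratedDerivWithin n f s x = iteratedDeriv n f x := by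
  rw [iteratedDerivWithin_eq_iteratedFDerivWithin, iteratedDeriv_eq_iteratedFDeriv,
    iteratedFDerivWithin_of_isOpen n hs hx]

lemma aux_dot_deriv {l : ℕ} {A : Matrix (Fin l) (Fin l) ℝ} {y : ℝ → Fin l → ℝ}
    (hy : ∀ t, HasDerivAt y (A *ᵥ y t) t) (c : Fin l → ℝ) (t : ℝ) :
    HasDerivAt (fun t => c ⬝ᵥ y t) (c ⬝ᵥ (A *ᵥ y t)) t := by
  simp only [dotProduct]
  exact HasDerivAt.fun_sum fun i _ => ((hasDerivAt_pi.1 (hy t) i).const_mul (c i))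

lemma aux_rhs_iter {l M : ℕ} (phat : Fin M → ℝ) (B : Matrix (Fin M) (Fin l) ℝ)
    {A : Matrix (Fin l) (Fin l) ℝ} {y : ℝ → Fin l → ℝ}
    (hy : ∀ t, HasDerivAt y (A *ᵥ y t) t) (j : ℕ) (t : ℝ) :
    iteratedDeriv j (fun t => phat ⬝ᵥ (B *ᵥ y t)) t = phat ⬝ᵥ (B *ᵥ (A ^ j *ᵥ y t)) := by
  induction j generalizing t with
  | zero => simp
  | succ j ih =>
      rw [iteratedDeriv_succ]
      have h1 : iteratedDeriv j (fun t => phat ⬝ᵥ (B *ᵥ y t))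
          = fun s => (phat ᵥ* (B * A ^ j)) ⬝ᵥ y s := by
        funext s
        rw [ih s, Matrix.mulVec_mulVec, Matrix.dotProduct_mulVec]
      rw [h1, (aux_dot_deriv hy (phat ᵥ* (B * A ^ j)) t).deriv]
      simp [Matrix.dotProduct_mulVec, Matrix.vecMul_vecMul, Matrix.mulVec_mulVec,
        pow_succ, Matrix.mul_assoc]

lemma aux_proj {M l : ℕ} {B : Matrix (Fin M) (Fin l) ℝ} (hortho : Bᵀ * B = 1)
    {w : Fin M → ℝ} (hw : w ∈ Submodule.span ℝ (Set.range Bᵀ)) :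
    B *ᵥ (Bᵀ *ᵥ w) = w := by
  induction hw using Submodule.span_induction with
  | mem w hw =>
      obtain ⟨i, rfl⟩ := hw
      have hcol : (Bᵀ i : Fin M → ℝ) = B *ᵥ Pi.single i 1 := by
        funext k
        simp [Matrix.mulVec_single, Matrix.transpose_apply]
      rw [hcol, Matrix.mulVec_mulVec, Matrix.mulVec_mulVec, Matrix.mul_assoc, hortho,
        Matrix.mul_one]
  | zero => simp
  | add u v hu hv ihu ihv => simp [Matrix.mulVec_add, ihu, ihv]
  | smul a u hu ihu => simp [Matrix.mulVec_smul, ihu]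

attribute [local instance] Matrix.linftyOpNormedRing Matrix.linftyOpNormedAlgebra

open NormedSpace in
/-- The solution of the linear ODE equals the matrix exponential applied to
the initial value. -/
lemma aux_y_eq {l : ℕ} (A : Matrix (Fin l) (Fin l) ℝ) (y : ℝ → Fin l → ℝ)
    (hy : ∀ t, HasDerivAt y (A *ᵥ y t) t) (t : ℝ) :
    y t = exp (t • A) *ᵥ y 0 := by
  set w : ℝ → Fin l → ℝ := fun t => exp (t • A) *ᵥ y 0 with hw
  have hΨ : ∃ Ψ : Matrix (Fin l) (Fin l) ℝ →L[ℝ] (Fin l → ℝ),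
      ∀ M : Matrix (Fin l) (Fin l) ℝ, Ψ M = M *ᵥ y 0 := by
    refine ⟨LinearMap.toContinuousLinearMap
      { toFun := fun M => M *ᵥ y 0
        map_add' := fun M N => Matrix.add_mulVec M N (y 0)
        map_smul' := fun c M => (Matrix.smul_mulVec c M (y 0)) }, fun M => rfl⟩
  obtain ⟨Ψ, hΨ⟩ := hΨ
  have hw' : ∀ s : ℝ, HasDerivAt w (A *ᵥ w s) s := by
    intro s
    have hexp := _root_.hasDerivAt_exp_smul_const' (𝕂 := ℝ) A s
    have h2 : HasDerivAt (fun u : ℝ => Ψ (exp (u • A))) (Ψ (A * exp (s • A))) s :=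
      Ψ.hasFDerivAt.comp_hasDerivAt s hexp
    have h3 : HasDerivAt w ((A * exp (s • A)) *ᵥ y 0) s := by
      simpa only [hΨ] using h2
    have h4 : A *ᵥ w s = (A * exp (s • A)) *ᵥ y 0 := by
      simp [hw, Matrix.mulVec_mulVec]
    rw [h4]
    exact h3
  have hlip : ∃ K : NNReal, LipschitzWith K (fun v : Fin l → ℝ => A *ᵥ v) := by
    refine ⟨‖(Matrix.mulVecLin A).toContinuousLinearMap‖₊, ?_⟩
    exact (Matrix.mulVecLin A).toContinuousLinearMap.lipschitz
  obtain ⟨K, hK⟩ := hlip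
  have hna := neg_abs_le t
  have hpa := le_abs_self t
  have h0a := abs_nonneg t
  have habs : t ∈ Set.Ioo (-(|t| + 1)) (|t| + 1) := ⟨by linarith, by linarith⟩
  have h0 : (0 : ℝ) ∈ Set.Ioo (-(|t| + 1)) (|t| + 1) := ⟨by linarith, by linarith⟩
  have := ODE_solution_unique_of_mem_Ioo (v := fun _ v => A *ᵥ v) (s := fun _ => Set.univ)
    (hv := fun _ _ => hK.lipschitzOnWith) h0
    (fun s _ => ⟨hy s, Set.mem_univ _⟩) (fun s _ => ⟨hw' s, Set.mem_univ _⟩)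
    (by simp [hw])
  exact this habs

open NormedSpace in
lemma aux_g_analytic {l M : ℕ} (phat : Fin M → ℝ) (B : Matrix (Fin M) (Fin l) ℝ)
    (A : Matrix (Fin l) (Fin l) ℝ) (c : Fin l → ℝ) (t : ℝ) :
    AnalyticAt ℝ (fun t : ℝ => phat ⬝ᵥ (B *ᵥ (exp (t • A) *ᵥ c))) t := by
  have hG : ∃ G : Matrix (Fin l) (Fin l) ℝ →L[ℝ] ℝ,
      ∀ M', G M' = phat ⬝ᵥ (B *ᵥ (M' *ᵥ c)) := by
    refine ⟨LinearMap.toContinuousLinearMap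
      { toFun := fun M' => phat ⬝ᵥ (B *ᵥ (M' *ᵥ c))
        map_add' := fun M' N => by
          simp [Matrix.add_mulVec, Matrix.mulVec_add, dotProduct_add]
        map_smul' := fun r M' => by
          simp [Matrix.smul_mulVec, Matrix.mulVec_smul, dotProduct_smul] },
      fun M' => rfl⟩
  obtain ⟨G, hG⟩ := hG
  have h1 : AnalyticAt ℝ (fun t : ℝ => t • A) t :=
    ((1 : ℝ →L[ℝ] ℝ).smulRight A).analyticAt t
  have h2 : AnalyticAt ℝ (exp) (t • A) := NormedSpace.exp_analytic _
  have h23 := AnalyticAt.comp (g := exp) (f := fun u : ℝ => u • A) (x := t) h2 h1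
  have h3 : AnalyticAt ℝ (G ∘ exp ∘ fun t : ℝ => t • A) t :=
    AnalyticAt.comp (g := ⇑G) (f := exp ∘ fun u : ℝ => u • A) (x := t) (G.analyticAt _) h23
  have : (fun t : ℝ => phat ⬝ᵥ (B *ᵥ (exp (t • A) *ᵥ c)))
      = G ∘ exp ∘ fun t : ℝ => t • A := by
    funext s; simp [hG]
  rw [this]
  exact h3

lemma aux_g_analyticAll {l M : ℕ} (phat : Fin M → ℝ) (B : Matrix (Fin M) (Fin l) ℝ)
    (A : Matrix (Fin l) (Fin l) ℝ) (y : ℝ → Fin l → ℝ)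
    (hy : ∀ t, HasDerivAt y (A *ᵥ y t) t) (s : ℝ) :
    AnalyticAt ℝ (fun t => phat ⬝ᵥ (B *ᵥ y t)) s := by
  have hfun : (fun t => phat ⬝ᵥ (B *ᵥ y t))
      = fun t : ℝ => phat ⬝ᵥ (B *ᵥ (NormedSpace.exp (t • A) *ᵥ y 0)) := by
    funext u; rw [aux_y_eq A y hy u]
  rw [hfun]
  exact aux_g_analytic phat B A (y 0) s

lemma aux_fderiv_diag {f : ℝ → ℝ} (n : ℕ) (z : ℝ) :
    iteratedFDeriv ℝ n f 0 (fun _ => z) = z ^ n * iteratedDeriv n f 0 := by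
  have : (fun _ : Fin n => z) = fun i : Fin n => z • (1 : ℝ) := by funext i; simp
  rw [this, (iteratedFDeriv ℝ n f 0).map_smul_univ (fun _ => z) (fun _ => 1)]
  simp [iteratedDeriv_eq_iteratedFDeriv, smul_eq_mul]

lemma aux_eventuallyEq {f g : ℝ → ℝ} (hf : AnalyticAt ℝ f 0) (hg : AnalyticAt ℝ g 0)
    (h : ∀ n, iteratedDeriv n f 0 = iteratedDeriv n g 0) : f =ᶠ[𝓝 (0:ℝ)] g := by
  obtain ⟨pf, rf, hrf⟩ := hf
  obtain ⟨pg, rg, hrg⟩ := hg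
  have hrpos : (0 : ENNReal) < min rf rg := lt_min hrf.r_pos hrg.r_pos
  have key : ∀ z : ℝ, z ∈ Metric.eball (0 : ℝ) (min rf rg) → f z = g z := by
    intro z hz
    have hzf : z ∈ Metric.eball (0 : ℝ) rf := Metric.eball_subset_eball (min_le_left _ _) hz
    have hzg : z ∈ Metric.eball (0 : ℝ) rg := Metric.eball_subset_eball (min_le_right _ _) hz
    have h1 := hrf.hasSum_iteratedFDeriv (y := z) (by simpa using hzf)
    have h2 := hrg.hasSum_iteratedFDeriv (y := z) (by simpa using hzg)
    simp only [zero_add] at h1 h2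
    have : (fun n : ℕ => ((n.factorial : ℝ))⁻¹ • iteratedFDeriv ℝ n f 0 (fun _ => z))
        = (fun n : ℕ => ((n.factorial : ℝ))⁻¹ • iteratedFDeriv ℝ n g 0 (fun _ => z)) := by
      funext n
      rw [aux_fderiv_diag, aux_fderiv_diag, h n]
    rw [this] at h1
    exact h1.unique h2
  have hball : Metric.eball (0 : ℝ) (min rf rg) ∈ 𝓝 (0 : ℝ) :=
    Metric.eball_mem_nhds _ hrpos
  filter_upwards [hball] with z hz using key z hz

end AuxLemmas

/-- exactness of the approximate linearization: in the setting of
the approximate linearization, if `𝓛⁽ʲ⁾(p) = ∑ₖ (Lʲ p̂)ₖ αₖ` holds for all `j ≥ 0`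
and the Krylov space `K_m` is invariant (`Lᵀ K_m ⊆ K_m`), then for every `j ≥ 0`
the `j`-th derivative at `0` of `t ↦ p(x(t))` equals that of `t ↦ p̂ᵀ B y(t)`; in
particular, if `t ↦ p(x(t))` is real-analytic on `D`, then `p(x(t)) = p̂ᵀ B y(t)`
for all `t ∈ D`. -/
theorem stmt19
    (N : ℕ) (hN : 1 ≤ N)
    (F : Fin N → MvPolynomial (Fin N) ℝ) (v₀ : Fin N → ℝ)
    (D : Set ℝ) (hD : IsOpen D) (hDc : D.OrdConnected) (h0 : (0 : ℝ) ∈ D)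
    (x : ℝ → Fin N → ℝ)
    (hsol : ∀ t ∈ D, HasDerivAt x (fun i => eval (x t) (F i)) t)
    (hx0 : x 0 = v₀)
    (m : ℕ) (hm : 1 ≤ m)
    (M : ℕ) (α : Fin M → MvPolynomial (Fin N) ℝ)
    (p : MvPolynomial (Fin N) ℝ)
    (phat : Fin M → ℝ) (L : Matrix (Fin M) (Fin M) ℝ)
    (hrep : ∀ j : ℕ, (lieDeriv F)^[j] p = ∑ k, ((L ^ j) *ᵥ phat) k • α k)
    (φ : Fin M → ℝ) (hφ : φ = fun k => eval v₀ (α k))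
    (hinv : ∀ w ∈ Submodule.span ℝ {w : Fin M → ℝ | ∃ j < m, w = (Lᵀ ^ j) *ᵥ φ},
      Lᵀ *ᵥ w ∈ Submodule.span ℝ {w : Fin M → ℝ | ∃ j < m, w = (Lᵀ ^ j) *ᵥ φ})
    (l : ℕ) (B : Matrix (Fin M) (Fin l) ℝ)
    (hortho : Bᵀ * B = 1)
    (hKspan : Submodule.span ℝ (Set.range Bᵀ)
      = Submodule.span ℝ {w : Fin M → ℝ | ∃ j < m, w = (Lᵀ ^ j) *ᵥ φ})
    (A : Matrix (Fin l) (Fin l) ℝ) (hA : A = Bᵀ * Lᵀ * B)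
    (y : ℝ → Fin l → ℝ)
    (hy : ∀ t, HasDerivAt y (A *ᵥ y t) t)
    (hy0 : y 0 = Bᵀ *ᵥ φ) :
    (∀ j : ℕ, iteratedDerivWithin j (fun t => eval (x t) p) D 0
      = iteratedDeriv j (fun t => phat ⬝ᵥ (B *ᵥ y t)) 0) ∧
    (AnalyticOnNhd ℝ (fun t => eval (x t) p) D →
      ∀ t ∈ D, eval (x t) p = phat ⬝ᵥ (B *ᵥ y t)) := by
  set K := Submodule.span ℝ {w : Fin M → ℝ | ∃ j < m, w = (Lᵀ ^ j) *ᵥ φ} with hK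
  -- membership of all Krylov vectors
  have hKmem : ∀ j : ℕ, (Lᵀ ^ j) *ᵥ φ ∈ K := by
    intro j
    induction j with
    | zero => exact Submodule.subset_span ⟨0, hm, rfl⟩
    | succ j ih =>
        have : (Lᵀ ^ (j + 1)) *ᵥ φ = Lᵀ *ᵥ ((Lᵀ ^ j) *ᵥ φ) := by
          rw [pow_succ']
          exact (Matrix.mulVec_mulVec φ Lᵀ (Lᵀ ^ j)).symm
        rw [this]
        exact hinv _ ih
  -- projection identity
  have hproj : ∀ w ∈ K, B *ᵥ (Bᵀ *ᵥ w) = w := by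
    intro w hw
    exact aux_proj hortho (by rw [hKspan]; exact hw)
  -- the key algebraic identity
  have hBA : ∀ j : ℕ, B *ᵥ (A ^ j *ᵥ (Bᵀ *ᵥ φ)) = (Lᵀ ^ j) *ᵥ φ := by
    intro j
    induction j with
    | zero =>
        simp only [pow_zero, Matrix.one_mulVec]
        have := hproj φ (by simpa using hKmem 0)
        simpa using this
    | succ j ih =>
        set u := A ^ j *ᵥ (Bᵀ *ᵥ φ) with hu
        have h1 : A ^ (j + 1) *ᵥ (Bᵀ *ᵥ φ) = A *ᵥ u := by
          rw [hu, pow_succ']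
          exact (Matrix.mulVec_mulVec (Bᵀ *ᵥ φ) A (A ^ j)).symm
        rw [h1, hA]
        clear_value u
        clear hu
        have h2 : (Bᵀ * Lᵀ * B) *ᵥ u = Bᵀ *ᵥ (Lᵀ *ᵥ (B *ᵥ u)) := by
          rw [Matrix.mulVec_mulVec, Matrix.mulVec_mulVec]
        rw [h2, ih]
        have h3 : Lᵀ *ᵥ ((Lᵀ ^ j) *ᵥ φ) ∈ K := hinv _ (hKmem j)
        rw [hproj _ h3, Matrix.mulVec_mulVec, ← pow_succ']
  -- both sides at 0 equal (L^j phat) ⬝ᵥ φ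
  have part1 : ∀ j : ℕ, iteratedDerivWithin j (fun t => eval (x t) p) D 0
      = iteratedDeriv j (fun t => phat ⬝ᵥ (B *ᵥ y t)) 0 := by
    intro j
    have hL : iteratedDerivWithin j (fun t => eval (x t) p) D 0
        = ((L ^ j) *ᵥ phat) ⬝ᵥ φ := by
      rw [aux_iterWithin hD hsol p j 0 h0, hx0, hrep j, map_sum]
      simp only [smul_eval, hφ, dotProduct]
    have hR : iteratedDeriv j (fun t => phat ⬝ᵥ (B *ᵥ y t)) 0
        = ((L ^ j) *ᵥ phat) ⬝ᵥ φ := by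
      rw [aux_rhs_iter phat B hy j 0, hy0, hBA j, ← Matrix.transpose_pow,
        Matrix.dotProduct_mulVec, Matrix.vecMul_transpose]
    rw [hL, hR]
  refine ⟨part1, ?_⟩
  intro hfa t ht
  have hg : ∀ s : ℝ, AnalyticAt ℝ (fun t => phat ⬝ᵥ (B *ᵥ y t)) s :=
    aux_g_analyticAll phat B A y hy
  have hev : (fun t => eval (x t) p) =ᶠ[𝓝 (0:ℝ)] (fun t => phat ⬝ᵥ (B *ᵥ y t)) := by
    refine aux_eventuallyEq (hfa 0 h0) (hg 0) ?_
    intro n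
    rw [← aux_iterDW_open hD h0 n, part1 n]
  exact AnalyticOnNhd.eqOn_of_preconnected_of_eventuallyEq hfa (fun s _ => hg s)
    hDc.isPreconnected h0 hev ht
end
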